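/- arXiv:2011.13163 — 3 statements merged into one kernel-verified Lean document; each statement's English description precedes it below -/
import Mathlib

section
/- In the eccentricity centrality game, if g is an APSN then every vertex belonging to a connected component of g with at least three vertices has degree at least two (equivalently, no component of size ≥ 3 of an APSN contains a pendant vertex). -/
open SimpleGraph

/-- Degree of vertex `i` in network `g`. -/
noncomputable def deg {V : Type*} (g : SimpleGraph V) (i : V) : ℕ :=
  Nat.card (g.neighborSet i)

/-- The network `g` with the (missing) edge `ij` added. -/
def addE {V : Type*} (g : SimpleGraph V) (i j : V) : SimpleGraph V :=
  g ⊔ SimpleGraph.fromEdgeSet {s(i, j)}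

/-- The network `g` with the edge `ij` removed. -/
def delE {V : Type*} (g : SimpleGraph V) (i j : V) : SimpleGraph V :=
  g.deleteEdges {s(i, j)}

/-- Utility of agent `i` in the game with centralities `C` and edge cost `c`. -/
noncomputable def util {V : Type*} (C : V → SimpleGraph V → ℝ) (c : ℝ) (i : V)
    (g : SimpleGraph V) : ℝ :=
  C i g - c * (deg g i)

/-- Adding the missing edge `ij` is an improving move. -/
def ImprovingAdd {V : Type*} (C : V → SimpleGraph V → ℝ) (c : ℝ) (g : SimpleGraph V)
    (i j : V) : Prop :=
  util C c i (addE g i j) ≥ util C c i g ∧ util C c j (addE g i j) ≥ util C c j g ∧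
    (util C c i (addE g i j) > util C c i g ∨ util C c j (addE g i j) > util C c j g)

/-- Deleting the edge `ij` is an improving move. -/
def ImprovingDel {V : Type*} (C : V → SimpleGraph V → ℝ) (c : ℝ) (g : SimpleGraph V)
    (i j : V) : Prop :=
  util C c i (delE g i j) > util C c i g ∨ util C c j (delE g i j) > util C c j g

/-- `g` is pairwise stable at edge cost `c`. -/
def PairwiseStable {V : Type*} (C : V → SimpleGraph V → ℝ) (c : ℝ) (g : SimpleGraph V) : Prop :=
  (∀ i j : V, i ≠ j → ¬ g.Adj i j → ¬ ImprovingAdd C c g i j) ∧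
  (∀ i j : V, g.Adj i j → ¬ ImprovingDel C c g i j)

/-- `g` is asymptotically pairwise stable. -/
def APSN {V : Type*} (C : V → SimpleGraph V → ℝ) (g : SimpleGraph V) : Prop :=
  ∃ ε₀ : ℝ, 0 < ε₀ ∧ ∀ c : ℝ, 0 < c → c < ε₀ → PairwiseStable C c g

/-- Axiom 1: the centrality of agent `i` is increasing. -/
def Axiom1 {V : Type*} (C : V → SimpleGraph V → ℝ) (i : V) : Prop :=
  ∀ (g : SimpleGraph V) (j : V), j ≠ i → ¬ g.Adj i j → C i (addE g i j) > C i g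

/-- Axiom 1′: the centrality of agent `i` is decreasing. -/
def Axiom1' {V : Type*} (C : V → SimpleGraph V → ℝ) (i : V) : Prop :=
  ∀ (g : SimpleGraph V) (j : V), j ≠ i → ¬ g.Adj i j → C i (addE g i j) < C i g

/-- Axiom 2: the centrality of agent `i` is componentwise. -/
def Axiom2 {V : Type*} (C : V → SimpleGraph V → ℝ) (i : V) : Prop :=
  ∀ (g : SimpleGraph V) (j : V), j ≠ i → ¬ g.Adj i j →
    ((g.Reachable i j → C i (addE g i j) > C i g) ∧
     (¬ g.Reachable i j → C i (addE g i j) ≤ C i g))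

/-- Axiom 2′: the centrality of agent `i` is peripheral. -/
def Axiom2' {V : Type*} (C : V → SimpleGraph V → ℝ) (i : V) : Prop :=
  ∀ (g : SimpleGraph V) (j : V), j ≠ i → ¬ g.Adj i j →
    ((g.Reachable i j → C i (addE g i j) ≤ C i g) ∧
     (¬ g.Reachable i j → C i (addE g i j) > C i g))

/-- The centrality of agent `i` is degree homophilic with (strictly increasing) `f`. -/
def DegreeHomophilic {V : Type*} (C : V → SimpleGraph V → ℝ) (i : V) (f : ℕ → ℤ) : Prop :=
  ∀ (g : SimpleGraph V) (j : V), j ≠ i → ¬ g.Adj i j →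
    (C i (addE g i j) > C i g ↔ (deg g j : ℤ) ≤ f (deg g i))

open scoped Classical in
/-- Eccentricity of `i` in `g`: the maximum distance from `i` to a vertex of its
connected component (`0` for an isolated vertex). -/
noncomputable def ecc {V : Type*} [Fintype V] (g : SimpleGraph V) (i : V) : ℕ :=
  Finset.univ.sup (fun j => if g.Reachable i j then g.dist i j else 0)

open scoped Classical in
/-- Eccentricity centrality of `i` in `g`: `0` if `i` is isolated,
`(n-1)/ecc_g(i)` otherwise. -/
noncomputable def Cecc {V : Type*} [Fintype V] (g : SimpleGraph V) (i : V) : ℝ :=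
  if ∃ j, g.Adj i j then ((Fintype.card V : ℝ) - 1) / (ecc g i : ℝ) else 0


section Aux

open SimpleGraph

/-- From a walk between two vertices distinct from the pendant vertex `i` (whose unique
neighbor is `k`), produce a walk of no greater length avoiding `i`. -/
lemma walk_avoid {V : Type*} {g : SimpleGraph V} {i k : V}
    (huniq : ∀ y, g.Adj i y → y = k) :
    ∀ (n : ℕ) ⦃x y : V⦄ (w : g.Walk x y), w.length ≤ n → x ≠ i → y ≠ i →
      ∃ w' : g.Walk x y, w'.length ≤ w.length ∧ i ∉ w'.support := by
  intro n
  induction n with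
  | zero =>
    intro x y w hw hx hy
    cases w with
    | nil => exact ⟨.nil, le_refl _, by simp [Ne.symm hx]⟩
    | cons h p => simp at hw
  | succ n ih =>
    intro x y w hw hx hy
    cases w with
    | nil => exact ⟨.nil, le_refl _, by simp [Ne.symm hx]⟩
    | @cons _ z _ h p =>
      by_cases hz : z = i
      · subst hz
        have hxk : x = k := huniq x h.symm
        cases p with
        | nil => exact absurd rfl hy
        | @cons _ z₂ _ h₂ p₂ =>
          have hz₂ : z₂ = k := huniq _ h₂
          subst hz₂
          subst hxk
          obtain ⟨w', hl, hs⟩ := ih p₂ (by simp only [SimpleGraph.Walk.length_cons] at hw; omega)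
            h₂.ne' hy
          exact ⟨w', by simp only [SimpleGraph.Walk.length_cons]; omega, hs⟩
      · obtain ⟨w', hl, hs⟩ := ih p (by simp only [SimpleGraph.Walk.length_cons] at hw; omega)
          hz hy
        refine ⟨Walk.cons h w', by simp only [SimpleGraph.Walk.length_cons]; omega, ?_⟩
        simp only [SimpleGraph.Walk.support_cons, List.mem_cons]
        rintro (rfl | hmem)
        · exact hx rfl
        · exact hs hmem

end Aux

theorem statement_12 {V : Type*} [Fintype V] (g : SimpleGraph V)
    (h : APSN (fun v h => Cecc h v) g) :
    ∀ i : V, 3 ≤ Nat.card {j : V | g.Reachable i j} → 2 ≤ deg g i := by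
  classical
  intro i hcard
  by_contra hdeg
  push_neg at hdeg
  rw [Nat.card_coe_set_eq] at hcard
  have hdeg01 : deg g i = 0 ∨ deg g i = 1 := by omega
  have hdegcard : deg g i = Fintype.card (g.neighborSet i) := Nat.card_eq_fintype_card
  rcases hdeg01 with hdeg0 | hdeg1
  · -- isolated vertex: component is {i}, contradiction with card ≥ 3
    rw [hdeg0] at hdegcard
    have hempty : IsEmpty (g.neighborSet i) := Fintype.card_eq_zero_iff.mp hdegcard.symm
    have hnoadj : ∀ y, ¬ g.Adj i y := fun y hy => hempty.false ⟨y, hy⟩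
    have hsub : {j : V | g.Reachable i j} ⊆ {i} := by
      intro j hj
      obtain ⟨w⟩ := hj
      cases w with
      | nil => exact rfl
      | cons h p => exact absurd h (hnoadj _)
    have := Set.ncard_le_ncard hsub (Set.finite_singleton i)
    rw [Set.ncard_singleton] at this
    omega
  · -- pendant vertex
    rw [hdeg1] at hdegcard
    obtain ⟨⟨k, hk0⟩, hall⟩ := Fintype.card_eq_one_iff.mp hdegcard.symm
    have hk : g.Adj i k := hk0
    have huniq : ∀ y, g.Adj i y → y = k := by
      intro y hy
      exact congrArg Subtype.val (hall ⟨y, hy⟩)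
    have hki : k ≠ i := hk.ne'
    -- a third vertex x₀ in the component
    obtain ⟨x₀, hx₀r, hx₀i, hx₀k⟩ :
        ∃ x₀, g.Reachable i x₀ ∧ x₀ ≠ i ∧ x₀ ≠ k := by
      by_contra hno
      push_neg at hno
      have hsub : {j : V | g.Reachable i j} ⊆ {i, k} := by
        intro j hj
        by_cases hji : j = i
        · exact Or.inl hji
        · exact Or.inr (hno j hj hji)
      have h2 := Set.ncard_le_ncard hsub (Set.toFinite _)
      have : ({i, k} : Set V).ncard ≤ 2 := by
        have := Set.ncard_insert_le i ({k} : Set V)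
        rw [Set.ncard_singleton] at this
        omega
      omega
    set g' : SimpleGraph V := g.deleteEdges {s(i, k)} with hg'
    -- i is isolated in g'
    have hno' : ∀ y, ¬ g'.Adj i y := by
      intro y hy
      rw [hg', SimpleGraph.deleteEdges_adj] at hy
      have := huniq y hy.1
      subst this
      exact hy.2 rfl
    -- walks in g between non-i vertices transfer to g' with no longer length
    have htrans : ∀ x y : V, x ≠ i → y ≠ i → g.Reachable x y →
        g'.Reachable x y ∧ g'.dist x y ≤ g.dist x y := by
      intro x y hx hy hr
      obtain ⟨p, hp⟩ := hr.exists_walk_length_eq_dist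
      obtain ⟨w', hl, hs⟩ := walk_avoid huniq p.length p le_rfl hx hy
      have hedges : ∀ e, e ∈ w'.edges → e ∉ ({s(i, k)} : Set (Sym2 V)) := by
        intro e he hmem
        rw [Set.mem_singleton_iff] at hmem
        subst hmem
        exact hs (w'.fst_mem_support_of_mem_edges he)
      refine ⟨⟨w'.toDeleteEdges _ hedges⟩, ?_⟩
      calc g'.dist x y ≤ (w'.toDeleteEdges _ hedges).length := SimpleGraph.dist_le _
        _ = w'.length := SimpleGraph.Walk.length_transfer _ _
        _ ≤ p.length := hl
        _ = g.dist x y := hp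
    have hrkx₀ : g.Reachable k x₀ := (hk.reachable.symm).trans hx₀r
    have hkx₀ : k ≠ x₀ := Ne.symm hx₀k
    obtain ⟨hrkx₀', hdkx₀⟩ := htrans k x₀ hki hx₀i hrkx₀
    -- k is not isolated in g'
    have hkadj' : ∃ j, g'.Adj k j := by
      obtain ⟨w⟩ := hrkx₀'
      cases w with
      | nil => exact absurd rfl hkx₀
      | cons h p => exact ⟨_, h⟩
    -- 1 ≤ ecc g' k
    have hecc'pos : 1 ≤ ecc g' k := by
      have hd : 1 ≤ g'.dist k x₀ := hrkx₀'.pos_dist_of_ne hkx₀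
      unfold ecc
      refine le_trans ?_ (Finset.le_sup (Finset.mem_univ x₀))
      beta_reduce
      rw [if_pos hrkx₀']
      exact hd
    -- ecc g' k ≤ ecc g k
    have heccle : ecc g' k ≤ ecc g k := by
      unfold ecc
      apply Finset.sup_le
      intro j _
      split_ifs with hr
      · have hji : j ≠ i := by
          rintro rfl
          obtain ⟨w⟩ := hr.symm
          cases w with
          | nil => exact hki rfl
          | cons h p => exact hno' _ h
        have hgr : g.Reachable k j := hr.mono (SimpleGraph.deleteEdges_le _)
        have h1 := (htrans k j hki hji hgr).2
        refine le_trans h1 ?_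
        refine le_trans ?_ (Finset.le_sup (Finset.mem_univ j))
        show g.dist k j ≤ if g.Reachable k j then g.dist k j else 0
        rw [if_pos hgr]
      · exact Nat.zero_le _
    have heccpos : 1 ≤ ecc g k := le_trans hecc'pos heccle
    -- n ≥ 3
    have hn3 : 3 ≤ Fintype.card V := by
      have hsub : {j : V | g.Reachable i j} ⊆ Set.univ := Set.subset_univ _
      have := Set.ncard_le_ncard hsub Set.finite_univ
      rw [Set.ncard_univ, Nat.card_eq_fintype_card] at this
      omega
    -- Cecc values
    have hCg : Cecc g k = ((Fintype.card V : ℝ) - 1) / (ecc g k : ℝ) := by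
      rw [Cecc, if_pos ⟨i, hk.symm⟩]
    have hCg' : Cecc g' k = ((Fintype.card V : ℝ) - 1) / (ecc g' k : ℝ) := by
      rw [Cecc, if_pos hkadj']
    -- Cecc g k ≤ Cecc g' k
    have hCle : Cecc g k ≤ Cecc g' k := by
      rw [hCg, hCg']
      apply div_le_div_of_nonneg_left
      · have : (3 : ℝ) ≤ (Fintype.card V : ℝ) := by exact_mod_cast hn3
        linarith
      · exact_mod_cast hecc'pos
      · exact_mod_cast heccle
    -- degree of k drops by one
    have hnbr : g'.neighborSet k = g.neighborSet k \ {i} := by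
      ext y
      simp only [SimpleGraph.mem_neighborSet, hg', SimpleGraph.deleteEdges_adj,
        Set.mem_diff, Set.mem_singleton_iff]
      constructor
      · rintro ⟨hadj, hne⟩
        refine ⟨hadj, ?_⟩
        rintro rfl
        exact hne (by rw [Sym2.eq_swap])
      · rintro ⟨hadj, hne⟩
        refine ⟨hadj, ?_⟩
        intro hmem
        rw [Sym2.eq_iff] at hmem
        rcases hmem with ⟨h1, h2⟩ | ⟨h1, h2⟩
        · exact hki h1
        · exact hne h2
    have hmemi : i ∈ g.neighborSet k := hk.symm
    have hdegk1 : 1 ≤ deg g k := by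
      rw [deg, Nat.card_coe_set_eq]
      have : 0 < (g.neighborSet k).ncard := by
        rw [Set.ncard_pos (Set.toFinite _)]
        exact ⟨i, hmemi⟩
      omega
    have hdegk : deg g' k = deg g k - 1 := by
      rw [deg, deg, Nat.card_coe_set_eq, Nat.card_coe_set_eq, hnbr,
        Set.ncard_diff_singleton_of_mem hmemi]
    -- stability
    obtain ⟨ε₀, hε₀, hstab⟩ := h
    have hc : (0 : ℝ) < ε₀ / 2 := by linarith
    have hc2 : ε₀ / 2 < ε₀ := by linarith
    have hps := hstab (ε₀ / 2) hc hc2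
    have hnd := hps.2 i k hk
    rw [ImprovingDel] at hnd
    push_neg at hnd
    have hle := hnd.2
    rw [util, util] at hle
    have hdelE : delE g i k = g' := rfl
    rw [hdelE, hdegk] at hle
    have hcast : ((deg g k - 1 : ℕ) : ℝ) = (deg g k : ℝ) - 1 := by
      have := hdegk1
      push_cast [this]
      ring
    rw [hcast] at hle
    linarith
end

section
/- Universality of truncated centrality games: for every network g and every family (C_i) of centralities each satisfying Axiom 1 (increasing), there exist thresholds (θ_i) — namely θ_i = C_i(g) for each i — such that g is an APSN of the truncated game with thresholds (θ_i). In particular, every network arises as an APSN of some truncated centrality game with increasing centralities. -/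
open SimpleGraph

section Aux
variable {V : Type*}

lemma addE_comm (g : SimpleGraph V) (i j : V) : addE g i j = addE g j i := by
  simp [addE, Sym2.eq_swap]

lemma delE_comm (g : SimpleGraph V) (i j : V) : delE g i j = delE g j i := by
  simp [delE, Sym2.eq_swap]

lemma not_adj_delE (g : SimpleGraph V) (i j : V) : ¬ (delE g i j).Adj i j := by
  simp [delE, SimpleGraph.deleteEdges_adj]

lemma addE_delE (g : SimpleGraph V) {i j : V} (h : g.Adj i j) :
    addE (delE g i j) i j = g := by
  have hij : i ≠ j := h.ne
  ext x y
  simp only [addE, delE, SimpleGraph.sup_adj, SimpleGraph.deleteEdges_adj,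
    SimpleGraph.fromEdgeSet_adj, Set.mem_singleton_iff]
  constructor
  · rintro (⟨ha, _⟩ | ⟨he, _⟩)
    · exact ha
    · rcases Sym2.eq_iff.mp he with ⟨rfl, rfl⟩ | ⟨rfl, rfl⟩
      · exact h
      · exact h.symm
  · intro ha
    by_cases he : s(x, y) = s(i, j)
    · right; exact ⟨he, ha.ne⟩
    · left; exact ⟨ha, he⟩

lemma neighborSet_addE (g : SimpleGraph V) {i j : V} (hij : i ≠ j) :
    (addE g i j).neighborSet i = insert j (g.neighborSet i) := by
  ext x
  simp only [SimpleGraph.mem_neighborSet, addE, SimpleGraph.sup_adj,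
    SimpleGraph.fromEdgeSet_adj, Set.mem_singleton_iff, Set.mem_insert_iff]
  constructor
  · rintro (ha | ⟨he, hne⟩)
    · exact Or.inr ha
    · rcases Sym2.eq_iff.mp he with ⟨-, rfl⟩ | ⟨h1, -⟩
      · exact Or.inl rfl
      · exact absurd h1 hij
  · rintro (rfl | ha)
    · exact Or.inr ⟨rfl, hij⟩
    · exact Or.inl ha

lemma deg_addE [Fintype V] (g : SimpleGraph V) {i j : V} (hij : i ≠ j)
    (hna : ¬ g.Adj i j) : deg (addE g i j) i = deg g i + 1 := by
  have hns := neighborSet_addE g hij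
  simp only [deg, Nat.card_coe_set_eq, hns]
  rw [Set.ncard_insert_of_notMem (by simpa using hna) (Set.toFinite _)]

lemma deg_delE [Fintype V] (g : SimpleGraph V) {i j : V} (h : g.Adj i j) :
    deg g i = deg (delE g i j) i + 1 := by
  conv_lhs => rw [← addE_delE g h]
  exact deg_addE _ h.ne (not_adj_delE g i j)

lemma C_lt_delE [Fintype V] {C : V → SimpleGraph V → ℝ} {i : V} (hCi : Axiom1 C i)
    (g : SimpleGraph V) {j : V} (h : g.Adj i j) : C i (delE g i j) < C i g := by
  have := hCi (delE g i j) j h.ne' (not_adj_delE g i j)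
  rwa [addE_delE g h] at this

end Aux

theorem statement_13 {V : Type*} [Fintype V] (g : SimpleGraph V)
    (C : V → SimpleGraph V → ℝ) (hC : ∀ i, Axiom1 C i) :
    -- with thresholds θ i = C i g, the network g is an APSN of the truncated game
    ∃ θ : V → ℝ, (∀ i, θ i = C i g) ∧
      APSN (fun i h => min (C i h) (θ i)) g := by
  classical
  refine ⟨fun i => C i g, fun i => rfl, ?_⟩
  set S : Finset (V × V) := Finset.univ.filter (fun p => g.Adj p.1 p.2) with hS
  have gap_pos : ∀ p ∈ S, 0 < C p.1 g - C p.1 (delE g p.1 p.2) := by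
    intro p hp
    have hadj : g.Adj p.1 p.2 := by simpa [hS] using hp
    have := C_lt_delE (hC p.1) g hadj
    linarith
  by_cases hSne : S.Nonempty
  · refine ⟨min 1 (S.inf' hSne (fun p => C p.1 g - C p.1 (delE g p.1 p.2))), ?_, ?_⟩
    · exact lt_min one_pos (by
        rw [Finset.lt_inf'_iff]
        exact fun p hp => gap_pos p hp)
    · intro c hc hcε
      constructor
      · intro i j hij hna himp
        have h1 := himp.1
        have hCC : C i g < C i (addE g i j) := hC i g j hij.symm hna
        have hdeg : deg (addE g i j) i = deg g i + 1 := deg_addE g hij hna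
        simp only [util, hdeg, min_eq_right hCC.le, min_self] at h1
        push_cast at h1
        nlinarith
      · intro i j hadj himp
        rcases himp with h1 | h1
        · have hCC := C_lt_delE (hC i) g hadj
          have hdeg := deg_delE g hadj
          simp only [util, hdeg, min_eq_left hCC.le, min_self] at h1
          have hmem : (i, j) ∈ S := by simp [hS, hadj]
          have hgap : S.inf' hSne (fun p => C p.1 g - C p.1 (delE g p.1 p.2)) ≤
              C i g - C i (delE g i j) := Finset.inf'_le _ hmem
          have hcε' : c < C i g - C i (delE g i j) :=
            lt_of_lt_of_le hcε (le_trans (min_le_right _ _) hgap)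
          push_cast at h1
          nlinarith
        · rw [delE_comm] at h1
          have hadj' := hadj.symm
          have hCC := C_lt_delE (hC j) g hadj'
          have hdeg := deg_delE g hadj'
          simp only [util, hdeg, min_eq_left hCC.le, min_self] at h1
          have hmem : (j, i) ∈ S := by simp [hS, hadj']
          have hgap : S.inf' hSne (fun p => C p.1 g - C p.1 (delE g p.1 p.2)) ≤
              C j g - C j (delE g j i) := Finset.inf'_le _ hmem
          have hcε' : c < C j g - C j (delE g j i) :=
            lt_of_lt_of_le hcε (le_trans (min_le_right _ _) hgap)
          push_cast at h1
          nlinarith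
  · refine ⟨1, one_pos, fun c hc _ => ⟨?_, ?_⟩⟩
    · intro i j hij hna himp
      have h1 := himp.1
      have hCC : C i g < C i (addE g i j) := hC i g j hij.symm hna
      have hdeg : deg (addE g i j) i = deg g i + 1 := deg_addE g hij hna
      simp only [util, hdeg, min_eq_right hCC.le, min_self] at h1
      push_cast at h1
      nlinarith
    · intro i j hadj _
      exact hSne ⟨(i, j), by simp [hS, hadj]⟩
end

section
/- Let (C_i) be arbitrary centralities and (θ_i) arbitrary thresholds, and let g be an APSN of the truncated game with thresholds (θ_i). If agent i satisfies θ_i ≤ C_i(g), then for every agent j adjacent to i in g one has C_i(g−ij) < θ_i; consequently the threshold of i is bracketed by a single edge flip: C_i(g−ij) < θ_i ≤ C_i(g) for every edge ij of g. -/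
open SimpleGraph

theorem statement_18 {V : Type*} [Fintype V] (C : V → SimpleGraph V → ℝ) (θ : V → ℝ)
    (g : SimpleGraph V) (h : APSN (fun i h => min (C i h) (θ i)) g)
    (i : V) (hi : θ i ≤ C i g) :
    ∀ j : V, g.Adj i j → C i (delE g i j) < θ i ∧ θ i ≤ C i g := by
  intro j hadj
  refine ⟨?_, hi⟩
  obtain ⟨ε₀, hε₀, hstab⟩ := h
  have hc0 : (0:ℝ) < ε₀ / 2 := by linarith
  have hPS := hstab (ε₀ / 2) hc0 (by linarith)
  have hnd := hPS.2 i j hadj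
  have hle : util (fun i h => min (C i h) (θ i)) (ε₀/2) i (delE g i j) ≤
      util (fun i h => min (C i h) (θ i)) (ε₀/2) i g :=
    le_of_not_gt (fun hlt => hnd (Or.inl hlt))
  have hdeg : deg (delE g i j) i < deg g i := by
    have hsub : (delE g i j).neighborSet i ⊂ g.neighborSet i := by
      constructor
      · intro x hx
        have := hx
        simp only [delE, SimpleGraph.mem_neighborSet, SimpleGraph.deleteEdges_adj] at this
        exact this.1
      · intro hsup
        have hj : j ∈ g.neighborSet i := hadj
        have hj2 := hsup hj
        simp [delE, SimpleGraph.mem_neighborSet, SimpleGraph.deleteEdges_adj] at hj2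
    have := Set.ncard_lt_ncard hsub (Set.toFinite _)
    simpa [deg, Nat.card_coe_set_eq] using this
  have hdegR : (deg (delE g i j) i : ℝ) + 1 ≤ (deg g i : ℝ) := by
    exact_mod_cast hdeg
  simp only [util] at hle
  have hmin : min (C i g) (θ i) = θ i := min_eq_right hi
  rw [hmin] at hle
  by_contra hcon
  push_neg at hcon
  rw [min_eq_right hcon] at hle
  nlinarith
end
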